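/- Let A be an n×n real matrix with ‖A‖₂ < 1, let e₁, …, e_k ∈ ℝⁿ, and define E_{j+1} = (A − I)(Σ_{i=1}^{j} A^{j−i} e_i) + e_{j+1} for j = 0, …, k−1. Then each column satisfies ‖E_{j+1}‖₂ ≤ (1 + ‖I − A‖₂) · max_{i=1,…,j+1} ‖e_i‖₂ / (1 − ‖A‖₂), and the matrix E = [E₁, …, E_k] ∈ ℝ^{n×k} satisfies ‖E‖₂ ≤ √k · (1 + ‖I − A‖₂) · max_{i=1,…,k} ‖e_i‖₂ / (1 − ‖A‖₂). -/

import Mathlib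

open scoped Matrix.Norms.L2Operator
open Matrix

/-- The Euclidean (ℓ₂) norm of a vector in `ℝⁿ`. -/
noncomputable def euclNorm {n : ℕ} (v : Fin n → ℝ) : ℝ := Real.sqrt (∑ i, v i ^ 2)

noncomputable def toE {n : ℕ} (v : Fin n → ℝ) : EuclideanSpace ℝ (Fin n) :=
  (WithLp.equiv 2 (Fin n → ℝ)).symm v

lemma euclNorm_eq {n : ℕ} (v : Fin n → ℝ) : euclNorm v = ‖toE v‖ := by
  rw [euclNorm, EuclideanSpace.norm_eq]
  congr 1
  refine Finset.sum_congr rfl fun i _ => ?_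
  rw [Real.norm_eq_abs, sq_abs]; rfl

lemma euclNorm_nonneg {n : ℕ} (v : Fin n → ℝ) : 0 ≤ euclNorm v := Real.sqrt_nonneg _

lemma euclNorm_mulVec_le {n m : ℕ} (A : Matrix (Fin m) (Fin n) ℝ) (v : Fin n → ℝ) :
    euclNorm (A.mulVec v) ≤ ‖A‖ * euclNorm v := by
  rw [euclNorm_eq, euclNorm_eq]
  exact A.l2_opNorm_mulVec (toE v)

lemma geom_bound {a : ℝ} (h0 : 0 ≤ a) (h1 : a < 1) (j : ℕ) :
    ∑ i ∈ Finset.range j, a ^ i ≤ (1 - a)⁻¹ := by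
  have := hasSum_geometric_of_lt_one h0 h1
  exact sum_le_hasSum _ (fun i _ => pow_nonneg h0 i) this

lemma Icc_geom (a : ℝ) (j : ℕ) :
    ∑ i ∈ Finset.Icc 1 j, a ^ (j - i) = ∑ t ∈ Finset.range j, a ^ t := by
  refine Finset.sum_nbij' (fun i => j - i) (fun t => j - t) ?_ ?_ ?_ ?_ ?_
  · intro i hi; simp only [Finset.mem_Icc] at hi; simp only [Finset.mem_range]; omega
  · intro t ht; simp only [Finset.mem_range] at ht; simp only [Finset.mem_Icc]; omega
  · intro i hi; simp only [Finset.mem_Icc] at hi; omega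
  · intro t ht; simp only [Finset.mem_range] at ht; omega
  · intro i hi; rfl

lemma abs_sum_le {k : ℕ} (x : EuclideanSpace ℝ (Fin k)) :
    ∑ j, |x j| ≤ Real.sqrt k * ‖x‖ := by
  have h1 : (∑ j, |x j|) ^ 2 ≤ (k : ℝ) * ∑ j, x j ^ 2 := by
    have := sq_sum_le_card_mul_sum_sq (s := (Finset.univ : Finset (Fin k)))
      (f := fun j => |x j|)
    simpa [sq_abs] using this
  have h2 : ∑ j, |x j| = Real.sqrt ((∑ j, |x j|) ^ 2) := by
    rw [Real.sqrt_sq (by positivity)]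
  rw [h2, EuclideanSpace.norm_eq, ← Real.sqrt_mul (by positivity)]
  apply Real.sqrt_le_sqrt
  simpa [Real.norm_eq_abs, sq_abs] using h1

lemma opNorm_le_of_cols {n k : ℕ} (M : Matrix (Fin n) (Fin k) ℝ) (B : ℝ) (hB : 0 ≤ B)
    (h : ∀ j : Fin k, ‖toE (fun r => M r j)‖ ≤ B) : ‖M‖ ≤ Real.sqrt k * B := by
  rw [Matrix.l2_opNorm_def]
  apply ContinuousLinearMap.opNorm_le_bound _ (by positivity)
  intro x
  have hx : (Matrix.toEuclideanLin.trans LinearMap.toContinuousLinearMap M) x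
      = ∑ j, x j • toE (fun r => M r j) := by
    have hs : (∑ j, x j • toE (fun r => M r j))
        = toE (∑ j, x j • (fun r => M r j)) := by
      simp only [toE, WithLp.equiv_symm_apply, ← WithLp.toLp_smul, WithLp.toLp_sum]
    rw [hs]
    apply (WithLp.equiv 2 (Fin n → ℝ)).injective
    funext r
    simp [Matrix.toEuclideanLin_apply, Matrix.mulVec, dotProduct, toE,
      Finset.sum_apply, mul_comm]
  rw [hx]
  calc ‖∑ j, x j • toE (fun r => M r j)‖ ≤ ∑ j, ‖x j • toE (fun r => M r j)‖ :=
        norm_sum_le _ _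
    _ ≤ ∑ j : Fin k, |x j| * B := by
        refine Finset.sum_le_sum fun j _ => ?_
        rw [norm_smul, Real.norm_eq_abs]
        exact mul_le_mul_of_nonneg_left (h j) (abs_nonneg _)
    _ = (∑ j, |x j|) * B := by rw [Finset.sum_mul]
    _ ≤ (Real.sqrt k * ‖x‖) * B := mul_le_mul_of_nonneg_right (abs_sum_le x) hB
    _ = Real.sqrt k * B * ‖x‖ := by ring

lemma euclNorm_add_le {n : ℕ} (u v : Fin n → ℝ) :
    euclNorm (u + v) ≤ euclNorm u + euclNorm v := by
  rw [euclNorm_eq, euclNorm_eq, euclNorm_eq]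
  exact norm_add_le (toE u) (toE v)

lemma euclNorm_sum_le {α : Type*} {n : ℕ} (s : Finset α) (f : α → Fin n → ℝ) :
    euclNorm (∑ a ∈ s, f a) ≤ ∑ a ∈ s, euclNorm (f a) := by
  classical
  induction s using Finset.induction with
  | empty => simp [euclNorm]
  | insert _ _ hx ih =>
      rw [Finset.sum_insert hx, Finset.sum_insert hx]
      exact (euclNorm_add_le _ _).trans (by linarith)

lemma norm_pow_le_l2 {n : ℕ} (A : Matrix (Fin n) (Fin n) ℝ) (m : ℕ) :
    ‖A ^ m‖ ≤ ‖A‖ ^ m := by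
  cases m with
  | zero =>
      simp only [pow_zero]
      have h1 : ‖(1 : Matrix (Fin n) (Fin n) ℝ)ᴴ * 1‖
          = ‖(1 : Matrix (Fin n) (Fin n) ℝ)‖ * ‖(1 : Matrix (Fin n) (Fin n) ℝ)‖ :=
        Matrix.l2_opNorm_conjTranspose_mul_self 1
      rw [Matrix.conjTranspose_one, mul_one] at h1
      nlinarith [norm_nonneg (1 : Matrix (Fin n) (Fin n) ℝ)]
  | succ m => exact norm_pow_le' A m.succ_pos

/-- Bounds on the columns `E_{j+1} = (A-I)(Σ_{i=1}^{j} A^{j-i} e_i) + e_{j+1}`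
and on the spectral norm of the error matrix `E = [E₁, …, E_k]` when `‖A‖₂ < 1`. -/
theorem error_matrix_bound {n k : ℕ} (hk : 0 < k) (A : Matrix (Fin n) (Fin n) ℝ)
    (hA : ‖A‖ < 1) (e : ℕ → Fin n → ℝ) (E : ℕ → Fin n → ℝ)
    (hE : ∀ j : ℕ, j < k → E (j + 1) =
      (A - 1).mulVec (∑ i ∈ Finset.Icc 1 j, (A ^ (j - i)).mulVec (e i)) + e (j + 1))
    (Emat : Matrix (Fin n) (Fin k) ℝ)
    (hEmat : ∀ (r : Fin n) (j : Fin k), Emat r j = E ((j : ℕ) + 1) r) :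
    (∀ j : ℕ, j < k → euclNorm (E (j + 1)) ≤
      (1 + ‖(1 : Matrix (Fin n) (Fin n) ℝ) - A‖) *
        ((Finset.Icc 1 (j + 1)).sup' (Finset.nonempty_Icc.mpr (by omega))
          fun i => euclNorm (e i)) / (1 - ‖A‖)) ∧
    ‖Emat‖ ≤ Real.sqrt k * (1 + ‖(1 : Matrix (Fin n) (Fin n) ℝ) - A‖) *
        ((Finset.Icc 1 k).sup' (Finset.nonempty_Icc.mpr (by omega))
          fun i => euclNorm (e i)) / (1 - ‖A‖) := by
  set a := ‖A‖ with ha_def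
  have ha0 : 0 ≤ a := norm_nonneg _
  have h1a : 0 < 1 - a := by linarith
  set b := ‖(1 : Matrix (Fin n) (Fin n) ℝ) - A‖ with hb_def
  have hb0 : 0 ≤ b := norm_nonneg _
  have hc : 1 ≤ (1 - a)⁻¹ := by
    rw [le_inv_comm₀ one_pos h1a]; linarith
  -- column bound
  have hcol : ∀ j : ℕ, j < k → euclNorm (E (j + 1)) ≤
      (1 + b) * ((Finset.Icc 1 (j + 1)).sup' (Finset.nonempty_Icc.mpr (by omega))
        fun i => euclNorm (e i)) / (1 - a) := by
    intro j hj
    set Mx := (Finset.Icc 1 (j + 1)).sup' (Finset.nonempty_Icc.mpr (by omega))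
      (fun i => euclNorm (e i)) with hMx_def
    have hle : ∀ i ∈ Finset.Icc 1 (j + 1), euclNorm (e i) ≤ Mx :=
      fun i hi => Finset.le_sup' (fun i => euclNorm (e i)) hi
    have hMx0 : 0 ≤ Mx :=
      le_trans (euclNorm_nonneg (e 1)) (hle 1 (by simp [Finset.mem_Icc]))
    have hS : euclNorm (∑ i ∈ Finset.Icc 1 j, (A ^ (j - i)).mulVec (e i))
        ≤ (1 - a)⁻¹ * Mx := by
      calc euclNorm (∑ i ∈ Finset.Icc 1 j, (A ^ (j - i)).mulVec (e i))
          ≤ ∑ i ∈ Finset.Icc 1 j, euclNorm ((A ^ (j - i)).mulVec (e i)) :=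
            euclNorm_sum_le _ _
        _ ≤ ∑ i ∈ Finset.Icc 1 j, a ^ (j - i) * Mx := by
            refine Finset.sum_le_sum fun i hi => ?_
            refine (euclNorm_mulVec_le _ _).trans ?_
            have h1 : ‖A ^ (j - i)‖ ≤ a ^ (j - i) := norm_pow_le_l2 A (j - i)
            have h2 : euclNorm (e i) ≤ Mx := by
              apply hle
              simp only [Finset.mem_Icc] at hi ⊢; omega
            exact mul_le_mul h1 h2 (euclNorm_nonneg _) (pow_nonneg ha0 _)
        _ = (∑ i ∈ Finset.Icc 1 j, a ^ (j - i)) * Mx := by rw [Finset.sum_mul]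
        _ ≤ (1 - a)⁻¹ * Mx := by
            refine mul_le_mul_of_nonneg_right ?_ hMx0
            rw [Icc_geom a j]
            exact geom_bound ha0 hA j
    have he : euclNorm (e (j + 1)) ≤ Mx := hle (j + 1) (by simp [Finset.mem_Icc])
    have hAI : ‖A - 1‖ = b := by rw [hb_def, norm_sub_rev]
    calc euclNorm (E (j + 1))
        = euclNorm ((A - 1).mulVec (∑ i ∈ Finset.Icc 1 j, (A ^ (j - i)).mulVec (e i))
            + e (j + 1)) := by rw [hE j hj]
      _ ≤ euclNorm ((A - 1).mulVec (∑ i ∈ Finset.Icc 1 j, (A ^ (j - i)).mulVec (e i)))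
            + euclNorm (e (j + 1)) := euclNorm_add_le _ _
      _ ≤ ‖A - 1‖ * ((1 - a)⁻¹ * Mx) + Mx := by
          refine add_le_add ?_ he
          exact (euclNorm_mulVec_le _ _).trans
            (mul_le_mul_of_nonneg_left hS (norm_nonneg _))
      _ = b * ((1 - a)⁻¹ * Mx) + Mx := by rw [hAI]
      _ ≤ (1 + b) * Mx / (1 - a) := by
          rw [div_eq_mul_inv]
          nlinarith [mul_le_mul_of_nonneg_left hc hMx0,
            mul_le_mul_of_nonneg_left (mul_le_mul_of_nonneg_left hc hMx0) hb0]
  refine ⟨hcol, ?_⟩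
  -- matrix bound
  set Mk := (Finset.Icc 1 k).sup' (Finset.nonempty_Icc.mpr (by omega))
    (fun i => euclNorm (e i)) with hMk_def
  have hMk0 : 0 ≤ Mk :=
    le_trans (euclNorm_nonneg (e 1))
      (Finset.le_sup' (fun i => euclNorm (e i)) (by simp only [Finset.mem_Icc]; omega))
  set B := (1 + b) * Mk / (1 - a) with hB_def
  have hB0 : 0 ≤ B := by
    apply div_nonneg _ (le_of_lt h1a)
    exact mul_nonneg (by linarith) hMk0
  have hcols : ∀ j : Fin k, ‖toE (fun r => Emat r j)‖ ≤ B := by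
    intro j
    have hcolj : (fun r => Emat r j) = E ((j : ℕ) + 1) := by
      funext r; exact hEmat r j
    rw [hcolj, ← euclNorm_eq]
    refine (hcol j j.isLt).trans ?_
    rw [hB_def]
    apply (div_le_div_iff_of_pos_right h1a).mpr
    refine mul_le_mul_of_nonneg_left ?_ (by linarith)
    apply Finset.sup'_le
    intro i hi
    refine Finset.le_sup' (fun i => euclNorm (e i)) ?_
    simp only [Finset.mem_Icc] at hi ⊢
    omega
  have := opNorm_le_of_cols Emat B hB0 hcols
  calc ‖Emat‖ ≤ Real.sqrt k * B := this
    _ = Real.sqrt k * (1 + b) * Mk / (1 - a) := by rw [hB_def]; ring
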